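/- Let P and X be metric spaces and F : P ⇉ X a set-valued map with (p₀,x₀) ∈ graph F. Then F has the Aubin property around (p₀,x₀) if and only if the scalar function (p,x) ↦ dist(x, F(p)) is Lipschitz continuous on some neighbourhood of (p₀,x₀) (with values in [0,∞], finite on that neighbourhood). -/

import Mathlib

open Metric Set

theorem aubin_iff_dist_locally_lipschitz
    {P : Type*} [MetricSpace P] {X : Type*} [MetricSpace X]
    (F : P → Set X) (p₀ : P) (x₀ : X) (hx₀ : x₀ ∈ F p₀) :
    (∃ δ > (0:ℝ), ∃ η > (0:ℝ), ∃ ℓ > (0:ℝ),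
      ∀ p₁ ∈ closedBall p₀ δ, ∀ p₂ ∈ closedBall p₀ δ,
        F p₁ ∩ closedBall x₀ η ⊆
          {x | EMetric.infEdist x (F p₂) ≤ ENNReal.ofReal (ℓ * dist p₁ p₂)})
    ↔ (∃ r > (0:ℝ), ∃ ℓ' > (0:ℝ),
        (∀ q ∈ ball (p₀, x₀) r, EMetric.infEdist q.2 (F q.1) ≠ ⊤) ∧
        (∀ q₁ ∈ ball (p₀, x₀) r, ∀ q₂ ∈ ball (p₀, x₀) r,
          EMetric.infEdist q₁.2 (F q₁.1) ≤ EMetric.infEdist q₂.2 (F q₂.1) +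
            ENNReal.ofReal (ℓ' * (dist q₁.1 q₂.1 + dist q₁.2 q₂.2)))) := by
  constructor
  · rintro ⟨δ, hδ, η, hη, ℓ, hℓ, hA⟩
    have hℓ3 : (0:ℝ) < ℓ + 3 := by linarith
    set r : ℝ := min δ (η / (ℓ + 3)) with hr_def
    have hr : 0 < r := lt_min hδ (div_pos hη hℓ3)
    have hrδ : r ≤ δ := min_le_left _ _
    have hrη : (ℓ + 3) * r ≤ η := by
      have := min_le_right δ (η / (ℓ + 3))
      calc (ℓ + 3) * r ≤ (ℓ + 3) * (η / (ℓ + 3)) := by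
            exact mul_le_mul_of_nonneg_left this hℓ3.le
        _ = η := by field_simp
    have hmem : ∀ q : P × X, q ∈ ball (p₀, x₀) r →
        dist q.1 p₀ < r ∧ dist q.2 x₀ < r := by
      intro q hq
      rw [mem_ball, Prod.dist_eq, max_lt_iff] at hq
      exact hq
    have hpball : ∀ p : P, dist p p₀ < r → p ∈ closedBall p₀ δ := fun p hp =>
      mem_closedBall.mpr (le_of_lt (lt_of_lt_of_le hp hrδ))
    have hx₀mem : x₀ ∈ F p₀ ∩ closedBall x₀ η := ⟨hx₀, mem_closedBall_self hη.le⟩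
    -- basic bound: infEdist x₀ (F p) ≤ ofReal (ℓ * dist p₀ p)
    have hbase : ∀ p : P, p ∈ closedBall p₀ δ →
        EMetric.infEdist x₀ (F p) ≤ ENNReal.ofReal (ℓ * dist p₀ p) :=
      fun p hp => hA p₀ (mem_closedBall_self hδ.le) p hp hx₀mem
    refine ⟨r, hr, ℓ + 1, by linarith, ?_, ?_⟩
    · intro q hq
      obtain ⟨hq1, hq2⟩ := hmem q hq
      have h1 : EMetric.infEdist q.2 (F q.1) ≤
          edist q.2 x₀ + EMetric.infEdist x₀ (F q.1) :=
        EMetric.infEdist_le_edist_add_infEdist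
      have h2 : edist q.2 x₀ + EMetric.infEdist x₀ (F q.1) < ⊤ := by
        apply ENNReal.add_lt_top.mpr
        exact ⟨edist_lt_top _ _,
          lt_of_le_of_lt (hbase q.1 (hpball _ hq1)) ENNReal.ofReal_lt_top⟩
      exact ne_of_lt (lt_of_le_of_lt h1 h2)
    · rintro ⟨p₁, x₁⟩ hq₁ ⟨p₂, x₂⟩ hq₂
      obtain ⟨hp₁, hx₁⟩ := hmem _ hq₁
      obtain ⟨hp₂, hx₂⟩ := hmem _ hq₂
      simp only
      have hfin : EMetric.infEdist x₂ (F p₂) ≤ ENNReal.ofReal ((ℓ + 1) * r) := by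
        calc EMetric.infEdist x₂ (F p₂) ≤ edist x₂ x₀ + EMetric.infEdist x₀ (F p₂) :=
              EMetric.infEdist_le_edist_add_infEdist
          _ ≤ ENNReal.ofReal r + ENNReal.ofReal (ℓ * r) := by
              gcongr
              · rw [edist_dist]
                exact ENNReal.ofReal_le_ofReal hx₂.le
              · refine le_trans (hbase p₂ (hpball _ hp₂)) (ENNReal.ofReal_le_ofReal ?_)
                have : dist p₀ p₂ ≤ r := by rw [dist_comm]; exact hp₂.le
                exact mul_le_mul_of_nonneg_left this hℓ.le
          _ = ENNReal.ofReal ((ℓ + 1) * r) := by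
              rw [← ENNReal.ofReal_add hr.le (by positivity)]
              ring_nf
      have hfin' : EMetric.infEdist x₂ (F p₂) ≠ ⊤ :=
        ne_of_lt (lt_of_le_of_lt hfin ENNReal.ofReal_lt_top)
      apply ENNReal.le_of_forall_pos_le_add
      intro ε hε _
      set ε' : ℝ := min (ε : ℝ) r with hε'_def
      have hε' : 0 < ε' := lt_min hε hr
      -- pick y ∈ F p₂ close to x₂
      have hlt : EMetric.infEdist x₂ (F p₂) <
          EMetric.infEdist x₂ (F p₂) + ENNReal.ofReal ε' :=
        ENNReal.lt_add_right hfin' (by simp [ENNReal.ofReal_pos, hε'])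
      obtain ⟨y, hyF, hy⟩ := EMetric.infEdist_lt_iff.mp hlt
      -- y is within closedBall x₀ η
      have hyd : dist x₂ y < (ℓ + 2) * r := by
        have h1 : edist x₂ y < ENNReal.ofReal ((ℓ + 2) * r) := by
          calc edist x₂ y < EMetric.infEdist x₂ (F p₂) + ENNReal.ofReal ε' := hy
            _ ≤ ENNReal.ofReal ((ℓ + 1) * r) + ENNReal.ofReal r := by
                gcongr
                exact min_le_right _ _
            _ = ENNReal.ofReal ((ℓ + 2) * r) := by
                rw [← ENNReal.ofReal_add (by positivity) hr.le]
                ring_nf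
        exact (edist_lt_ofReal).mp h1
      have hyη : y ∈ closedBall x₀ η := by
        rw [mem_closedBall]
        calc dist y x₀ ≤ dist y x₂ + dist x₂ x₀ := dist_triangle _ _ _
          _ ≤ (ℓ + 2) * r + r := by
              rw [dist_comm y x₂]
              exact add_le_add hyd.le hx₂.le
          _ = (ℓ + 3) * r := by ring
          _ ≤ η := hrη
      have hAub : EMetric.infEdist y (F p₁) ≤ ENNReal.ofReal (ℓ * dist p₂ p₁) :=
        hA p₂ (hpball _ hp₂) p₁ (hpball _ hp₁) ⟨hyF, hyη⟩
      calc EMetric.infEdist x₁ (F p₁)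
          ≤ edist x₁ y + EMetric.infEdist y (F p₁) :=
            EMetric.infEdist_le_edist_add_infEdist
        _ ≤ (edist x₁ x₂ + edist x₂ y) + ENNReal.ofReal (ℓ * dist p₂ p₁) :=
            add_le_add (edist_triangle _ _ _) hAub
        _ ≤ (edist x₁ x₂ + (EMetric.infEdist x₂ (F p₂) + ENNReal.ofReal ε'))
              + ENNReal.ofReal (ℓ * dist p₂ p₁) := by gcongr
        _ = EMetric.infEdist x₂ (F p₂) +
              ((edist x₁ x₂ + ENNReal.ofReal (ℓ * dist p₂ p₁)) + ENNReal.ofReal ε') := by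
            ring
        _ ≤ EMetric.infEdist x₂ (F p₂) +
              (ENNReal.ofReal ((ℓ + 1) * (dist p₁ p₂ + dist x₁ x₂)) + ε) := by
            gcongr
            · rw [edist_dist, ← ENNReal.ofReal_add dist_nonneg (by positivity)]
              apply ENNReal.ofReal_le_ofReal
              rw [dist_comm p₂ p₁]
              nlinarith [dist_nonneg (x := p₁) (y := p₂), dist_nonneg (x := x₁) (y := x₂), hℓ.le]
            · calc ENNReal.ofReal ε' ≤ ENNReal.ofReal (ε : ℝ) :=
                  ENNReal.ofReal_le_ofReal (min_le_left _ _)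
                _ = (ε : ENNReal) := ENNReal.ofReal_coe_nnreal
        _ = EMetric.infEdist x₂ (F p₂) +
              ENNReal.ofReal ((ℓ + 1) * (dist p₁ p₂ + dist x₁ x₂)) + ε := by ring
  · rintro ⟨r, hr, ℓ', hℓ', _, hLip⟩
    refine ⟨r / 2, by linarith, r / 2, by linarith, ℓ', hℓ', ?_⟩
    intro p₁ hp₁ p₂ hp₂ x ⟨hxF, hxB⟩
    have hmem : ∀ p : P, p ∈ closedBall p₀ (r / 2) → ((p, x) : P × X) ∈ ball (p₀, x₀) r := by
      intro p hp
      rw [mem_ball, Prod.dist_eq, max_lt_iff]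
      constructor
      · exact lt_of_le_of_lt (mem_closedBall.mp hp) (by linarith)
      · exact lt_of_le_of_lt (mem_closedBall.mp hxB) (by linarith)
    have := hLip (p₂, x) (hmem p₂ hp₂) (p₁, x) (hmem p₁ hp₁)
    simp only [EMetric.infEdist_zero_of_mem hxF, zero_add, dist_self, add_zero,
      dist_comm p₂ p₁] at this
    have h0 : EMetric.infEdist x (F p₁) = 0 := EMetric.infEdist_zero_of_mem hxF
    rw [h0, zero_add] at this
    exact this
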